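/- Suppose there are at least two schools, at least one first-preference-first school, k > 1, and all schools have a common priority order. Then the constrained serial dictatorship mechanism SD^k is more fair by stability than the constrained First-Preference-First mechanism FPF^k: (i) for every problem (P,≻,q) with common priority, if FPF^k(P,≻,q) is stable at (P,≻,q) then SD^k(P,≻,q) is stable at (P,≻,q); and (ii) there exists such a problem at which SD^k is stable but FPF^k is not. -/

import Mathlib

/-!
School choice framework following Bonkoungou–Nesterov,
"Reforms meet fairness concerns in school and college admissions".

Students `I` and schools `S` are finite types with `|I| > |S|`.
A strict preference relation of a student over `S ∪ {∅}` is represented by a list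
of `Option S` containing every element exactly once (earlier = more preferred);
`none` is the outside option.  A strict priority order of a school is a list of
`I` containing every student exactly once (earlier = higher priority).
-/

namespace SchoolChoice

variable {I S : Type*} [Fintype I] [DecidableEq I] [Fintype S] [DecidableEq S]

/-- `p` is a strict preference relation on `S ∪ {∅}`: a ranking list containing every
element of `Option S` exactly once. -/
def ValidPref (p : List (Option S)) : Prop := p.Nodup ∧ ∀ x : Option S, x ∈ p

/-- `pr` is a strict priority order: a ranking list containing every student exactly once. -/
def ValidPrio (pr : List I) : Prop := pr.Nodup ∧ ∀ i : I, i ∈ pr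

/-- `a` is strictly preferred to `b` under the preference relation `p`. -/
def prefLt (p : List (Option S)) (a b : Option S) : Prop := p.idxOf a < p.idxOf b

/-- `i` has strictly higher priority than `j` under the priority order `pr`. -/
def prioLt (pr : List I) (i j : I) : Prop := pr.idxOf i < pr.idxOf j

instance (p : List (Option S)) (a b : Option S) : Decidable (prefLt p a b) :=
  inferInstanceAs (Decidable (_ < _))

instance (pr : List I) (i j : I) : Decidable (prioLt pr i j) :=
  inferInstanceAs (Decidable (_ < _))

/-- The acceptable schools of `p` (those preferred to the outside option), in preference
order. -/
def acceptables (p : List (Option S)) : List S := (p.takeWhile Option.isSome).filterMap id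

/-- The truncation of `p` after its `k`-th acceptable school: the preference relation
listing, in the same order, only the `min k _` most-preferred acceptable schools of `p`,
all other schools being unacceptable (kept below `none` in their original order). -/
def truncate (p : List (Option S)) (k : ℕ) : List (Option S) :=
  ((acceptables p).take k).map some ++
    none :: p.filter (fun x => decide (x ≠ none ∧ x ∉ ((acceptables p).take k).map some))

/-- `μ` is a matching: it respects the capacities `q`. -/
def IsMatching (q : S → ℕ) (μ : I → Option S) : Prop :=
  ∀ s : S, (Finset.univ.filter (fun i => μ i = some s)).card ≤ q s

/-- The pair `(i, s)` blocks `μ` under the problem `(P, prio, q)`. -/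
def Blocks (P : I → List (Option S)) (prio : S → List I) (q : S → ℕ)
    (μ : I → Option S) (i : I) (s : S) : Prop :=
  prefLt (P i) (some s) (μ i) ∧
    ((Finset.univ.filter (fun j => μ j = some s)).card < q s ∨
      ∃ j : I, μ j = some s ∧ prioLt (prio s) i j)

/-- `i` is a blocking student for `μ` under `(P, prio, q)`. -/
def BlockingStudent (P : I → List (Option S)) (prio : S → List I) (q : S → ℕ)
    (μ : I → Option S) (i : I) : Prop :=
  ∃ s : S, Blocks P prio q μ i s

/-- `μ` is individually rational under `P`. -/
def IndividuallyRational (P : I → List (Option S)) (μ : I → Option S) : Prop :=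
  ∀ i : I, ¬ prefLt (P i) none (μ i)

/-- `μ` is stable at `(P, prio, q)`. -/
def IsStable (P : I → List (Option S)) (prio : S → List I) (q : S → ℕ)
    (μ : I → Option S) : Prop :=
  IndividuallyRational P μ ∧ ∀ i : I, ¬ BlockingStudent P prio q μ i

/-- The number of blocking students for `μ` under `(P, prio, q)`. -/
noncomputable def numBlocking (P : I → List (Option S)) (prio : S → List I) (q : S → ℕ)
    (μ : I → Option S) : ℕ :=
  {i : I | BlockingStudent P prio q μ i}.ncard

/-! ### The Gale–Shapley student-proposing deferred acceptance mechanism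

The state `σ : I → ℕ` records, for each student, how many of her acceptable schools
have already rejected her; she currently applies to the `σ i`-th school on her list
(if any).  At each round every school tentatively keeps the `q s` highest-priority
students among its current applicants and rejects the rest, who move on. -/

/-- The school student `i` currently applies to. -/
def daTarget (P : I → List (Option S)) (σ : I → ℕ) (i : I) : Option S :=
  (acceptables (P i))[σ i]?

/-- The students tentatively held by school `s`: the `q s` highest-priority current
applicants. -/
def daHeld (P : I → List (Option S)) (prio : S → List I) (q : S → ℕ)
    (σ : I → ℕ) (s : S) : List I :=
  ((prio s).filter (fun i => decide (daTarget P σ i = some s))).take (q s)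

/-- One round of deferred acceptance: every rejected student moves to her next choice. -/
def daStep (P : I → List (Option S)) (prio : S → List I) (q : S → ℕ)
    (σ : I → ℕ) : I → ℕ := fun i =>
  match daTarget P σ i with
  | none => σ i
  | some s => if i ∈ daHeld P prio q σ s then σ i else σ i + 1

/-- The Gale–Shapley (student-proposing deferred acceptance) mechanism.  Iterating the
round map `|I| * |S| + 1` times is guaranteed to reach the terminal state. -/
def GS (P : I → List (Option S)) (prio : S → List I) (q : S → ℕ) : I → Option S :=
  fun i =>
    let σ := (daStep P prio q)^[Fintype.card I * Fintype.card S + 1] (fun _ => 0)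
    match daTarget P σ i with
    | none => none
    | some s => if i ∈ daHeld P prio q σ s then some s else none

/-- The constrained Gale–Shapley mechanism `GS^k`. -/
def GSk (k : ℕ) (P : I → List (Option S)) (prio : S → List I) (q : S → ℕ) : I → Option S :=
  GS (fun i => truncate (P i) k) prio q

/-! ### The Boston (immediate acceptance) mechanism -/

/-- Round `t` of the Boston mechanism: each not-yet-accepted student applies to her
`t`-th ranked acceptable school (0-indexed), and each school permanently accepts, up to
its remaining capacity, its highest-priority new applicants. -/
def bostonRound (P : I → List (Option S)) (prio : S → List I) (q : S → ℕ)
    (μ : I → Option S) (t : ℕ) : I → Option S := fun i =>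
  match μ i with
  | some s => some s
  | none =>
    match (acceptables (P i))[t]? with
    | none => none
    | some s =>
      if i ∈ ((prio s).filter
            (fun j => decide (μ j = none ∧ (acceptables (P j))[t]? = some s))).take
          (q s - (Finset.univ.filter (fun j => μ j = some s)).card)
      then some s else none

/-- The Boston (immediate acceptance) mechanism. -/
def Boston (P : I → List (Option S)) (prio : S → List I) (q : S → ℕ) : I → Option S :=
  (List.range (Fintype.card S)).foldl (bostonRound P prio q) (fun _ => none)

/-- The constrained Boston mechanism `β^k`. -/
def Bostonk (k : ℕ) (P : I → List (Option S)) (prio : S → List I) (q : S → ℕ) :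
    I → Option S :=
  Boston (fun i => truncate (P i) k) prio q

/-! ### The first-preference-first mechanism -/

/-- The adjusted priority profile: each first-preference-first school (member of `fpf`)
ranks students first by the rank they assign to it under `P` (counting the ranking of the
outside option as well), ties broken by the original priority; equal-preference schools
keep their original priority. -/
def fpfPrio (fpf : Finset S) (P : I → List (Option S)) (prio : S → List I) : S → List I :=
  fun s =>
    if s ∈ fpf then
      (List.range (Fintype.card S + 1)).flatMap
        (fun r => (prio s).filter (fun i => decide ((P i).idxOf (some s) = r)))
    else prio s

/-- The first-preference-first mechanism with set `fpf` of first-preference-first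
schools: Gale–Shapley run on the adjusted priorities. -/
def FPF (fpf : Finset S) (P : I → List (Option S)) (prio : S → List I) (q : S → ℕ) :
    I → Option S :=
  GS P (fpfPrio fpf P prio) q

/-- The constrained first-preference-first mechanism `FPF^k`. -/
def FPFk (fpf : Finset S) (k : ℕ) (P : I → List (Option S)) (prio : S → List I)
    (q : S → ℕ) : I → Option S :=
  FPF fpf (fun i => truncate (P i) k) prio q

/-! ### Manipulation and equilibrium notions -/

/-- Student `i` is a manipulating student of the mechanism `φ` (with priorities and
capacities fixed) at the true profile `P`. -/
def ManipulatingStudent (φ : (I → List (Option S)) → I → Option S)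
    (P : I → List (Option S)) (i : I) : Prop :=
  ∃ Q : List (Option S), ValidPref Q ∧
    prefLt (P i) (φ (Function.update P i Q) i) (φ P i)

/-- The mechanism `φ` is not manipulable at `P`. -/
def NotManipulable (φ : (I → List (Option S)) → I → Option S)
    (P : I → List (Option S)) : Prop :=
  ∀ i : I, ¬ ManipulatingStudent φ P i

/-- `P'` is a Nash equilibrium of the game `(φ, P)` in which the sophisticated students
are the members of `M` (who may misreport, and best respond) and all other (sincere)
students report truthfully. -/
def NashEq (φ : (I → List (Option S)) → I → Option S) (P : I → List (Option S))
    (M : Finset I) (P' : I → List (Option S)) : Prop :=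
  (∀ i, ValidPref (P' i)) ∧ (∀ i ∉ M, P' i = P i) ∧
    ∀ i ∈ M, ∀ Q : List (Option S), ValidPref Q →
      ¬ prefLt (P i) (φ (Function.update P' i Q) i) (φ P' i)

/-! ### Semi-sophisticated students -/

/-- Student `i` is guaranteed her first choice `s`: `s` is her most-preferred acceptable
school and `i` is among the `q s` highest-priority students at `s`. -/
def GuaranteedFirstChoice (P : I → List (Option S)) (prio : S → List I) (q : S → ℕ)
    (i : I) (s : S) : Prop :=
  (acceptables (P i)).head? = some s ∧ (prio s).idxOf i < q s

instance (P : I → List (Option S)) (prio : S → List I) (q : S → ℕ) (i : I) (s : S) :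
    Decidable (GuaranteedFirstChoice P prio q i s) :=
  inferInstanceAs (Decidable (_ ∧ _))

/-- School `s` is competitive: at least `q s` students are guaranteed their first
choice `s`. -/
def Competitive (P : I → List (Option S)) (prio : S → List I) (q : S → ℕ) (s : S) : Prop :=
  q s ≤ (Finset.univ.filter (fun i => GuaranteedFirstChoice P prio q i s)).card

instance (P : I → List (Option S)) (prio : S → List I) (q : S → ℕ) (s : S) :
    Decidable (Competitive P prio q s) :=
  inferInstanceAs (Decidable (_ ≤ _))

/-- `P'` is a Nash equilibrium of the game `(GS^ℓ, P)` with semi-sophisticated students: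
every student guaranteed her first choice reports truthfully; every other student reports
truthfully if she has at most `ℓ` acceptable schools or all her acceptable schools are
competitive, and otherwise lists as acceptable, in the order given by her true preference,
only her acceptable schools that are not competitive. -/
def SemiSophProfile (ℓ : ℕ) (P : I → List (Option S)) (prio : S → List I) (q : S → ℕ)
    (P' : I → List (Option S)) : Prop :=
  ∀ i : I,
    ((∃ s : S, GuaranteedFirstChoice P prio q i s) → P' i = P i) ∧
    (¬ (∃ s : S, GuaranteedFirstChoice P prio q i s) →
      (((acceptables (P i)).length ≤ ℓ ∨ ∀ s ∈ acceptables (P i), Competitive P prio q s) →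
          P' i = P i) ∧
      (¬ ((acceptables (P i)).length ≤ ℓ ∨
            ∀ s ∈ acceptables (P i), Competitive P prio q s) →
          acceptables (P' i) =
            (acceptables (P i)).filter (fun s => decide (¬ Competitive P prio q s))))


/-! ### Auxiliary lemmas -/

section IdxAPI

variable {α : Type*} [BEq α] [LawfulBEq α] [DecidableEq α]

private lemma idx_cons (a b : α) (l : List α) :
    (b :: l).idxOf a = if b = a then 0 else l.idxOf a + 1 := by
  rw [List.idxOf_cons]
  by_cases h : b = a <;> simp [h, Bool.cond_eq_if, beq_iff_eq]

private lemma idx_append_left {a : α} {l₁ : List α} (h : a ∈ l₁) (l₂ : List α) :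
    (l₁ ++ l₂).idxOf a = l₁.idxOf a := by
  induction l₁ with
  | nil => simp at h
  | cons b l ih =>
    by_cases hb : b = a
    · simp [idx_cons, hb]
    · have : a ∈ l := by
        rcases List.mem_cons.mp h with h' | h'
        · exact absurd h'.symm hb
        · exact h'
      simp [idx_cons, hb, ih this]

private lemma idx_append_right {a : α} {l₁ : List α} (h : a ∉ l₁) (l₂ : List α) :
    (l₁ ++ l₂).idxOf a = l₁.length + l₂.idxOf a := by
  induction l₁ with
  | nil => simp
  | cons b l ih =>
    have hb : b ≠ a := fun hh => h (by simp [hh])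
    have : a ∉ l := fun hh => h (by simp [hh])
    simp [idx_cons, hb, ih this]
    omega

private lemma idx_lt_length {a : α} {l : List α} :
    l.idxOf a < l.length ↔ a ∈ l := by
  induction l with
  | nil => simp
  | cons b l ih =>
    by_cases hb : b = a
    · simp [idx_cons, hb]
    · simp [idx_cons, hb, Nat.add_lt_add_iff_right, ih, Ne.symm hb]

private lemma idx_getElem? {a : α} {l : List α} (h : a ∈ l) :
    l[l.idxOf a]? = some a := by
  induction l with
  | nil => simp at h
  | cons b l ih =>
    by_cases hb : b = a
    · simp [idx_cons, hb]
    · have : a ∈ l := by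
        rcases List.mem_cons.mp h with h' | h'
        · exact absurd h'.symm hb
        · exact h'
      simp [idx_cons, hb, ih this]

private lemma idx_inj {a b : α} {l : List α} (ha : a ∈ l) (hb : b ∈ l)
    (h : l.idxOf a = l.idxOf b) : a = b := by
  have h1 := idx_getElem? ha
  have h2 := idx_getElem? hb
  rw [h, h2] at h1
  exact (Option.some_injective _ h1).symm

private lemma idx_getElem_nodup {l : List α} (hl : l.Nodup) {n : ℕ} (h : n < l.length) :
    l.idxOf l[n] = n := by
  induction l generalizing n with
  | nil => simp at h
  | cons b l ih =>
    cases n with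
    | zero => simp [idx_cons]
    | succ n =>
      have hn : n < l.length := by simpa using h
      have hmem : l[n] ∈ l := List.getElem_mem hn
      have hb : b ≠ l[n] := fun hh => (List.nodup_cons.mp hl).1 (hh ▸ hmem)
      have : (b :: l)[n+1] = l[n] := by simp
      rw [this, idx_cons]
      simp [hb, ih (List.nodup_cons.mp hl).2 hn]

end IdxAPI

section Aux

variable {I S : Type*} [Fintype I] [DecidableEq I] [Fintype S] [DecidableEq S]

private lemma map_some_filterMap_id {l : List (Option S)} (h : ∀ x ∈ l, x.isSome) :
    (l.filterMap id).map some = l := by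
  induction l with
  | nil => simp
  | cons x xs ih =>
    cases x with
    | none => simpa using h none (by simp)
    | some a =>
      have := ih (fun x hx => h x (by simp [hx]))
      simp only [List.filterMap_cons, id]
      simpa using this

/-- Structure of a valid preference list. -/
private lemma ValidPref.decomp {p : List (Option S)} (hp : ValidPref p) :
    ∃ t, p = (acceptables p).map some ++ none :: t := by
  obtain ⟨x, t, hxt⟩ : ∃ x t, p.dropWhile Option.isSome = x :: t := by
    cases h : p.dropWhile Option.isSome with
    | nil =>
      have := List.dropWhile_eq_nil_iff.mp h none (hp.2 none)
      simp at this
    | cons x t => exact ⟨x, t, rfl⟩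
  have hx : x = none := by
    have hfind : p.find? (fun x => !x.isSome) = some x := by
      rw [List.find?_not_eq_head?_dropWhile, hxt]; rfl
    have := List.find?_some hfind
    cases x <;> simp_all
  have hTake : (acceptables p).map some = p.takeWhile Option.isSome := by
    apply map_some_filterMap_id
    exact fun y hy => List.mem_takeWhile_imp hy
  refine ⟨t, ?_⟩
  rw [acceptables] at hTake ⊢
  rw [hTake, ← hx, ← hxt, List.takeWhile_append_dropWhile]

private lemma acceptables_shape (l : List S) (t : List (Option S)) :
    acceptables (l.map some ++ none :: t) = l := by
  induction l with
  | nil => simp [acceptables]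
  | cons a l ih =>
    simp only [List.map_cons, List.cons_append, acceptables, List.takeWhile_cons] at ih ⊢
    simpa [List.filterMap_cons] using ih

private lemma ValidPref.nodup_acceptables {p : List (Option S)} (hp : ValidPref p) :
    (acceptables p).Nodup := by
  obtain ⟨t, ht⟩ := hp.decomp
  have := hp.1
  rw [ht, List.nodup_append] at this
  exact (List.nodup_map_iff (Option.some_injective S)).mp this.1

private lemma indexOf_map_some (l : List S) (a : S) :
    (l.map some).idxOf (some a) = l.idxOf a := by
  induction l with
  | nil => simp
  | cons b l ih =>
    by_cases h : b = a
    · simp [idx_cons, h]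
    · simp [idx_cons, h, ih, fun hh => h (Option.some_injective S hh)]

private lemma ValidPref.indexOf_some_mem {p : List (Option S)} (hp : ValidPref p)
    {a : S} (ha : a ∈ acceptables p) :
    p.idxOf (some a) = (acceptables p).idxOf a := by
  obtain ⟨t, ht⟩ := hp.decomp
  conv_lhs => rw [ht]
  rw [idx_append_left (by simpa using ha), indexOf_map_some]

private lemma ValidPref.indexOf_none {p : List (Option S)} (hp : ValidPref p) :
    p.idxOf none = (acceptables p).length := by
  obtain ⟨t, ht⟩ := hp.decomp
  conv_lhs => rw [ht]
  rw [idx_append_right (by simp), idx_cons]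
  simp

private lemma ValidPref.indexOf_some_not_mem {p : List (Option S)} (hp : ValidPref p)
    {a : S} (ha : a ∉ acceptables p) :
    (acceptables p).length < p.idxOf (some a) := by
  obtain ⟨t, ht⟩ := hp.decomp
  conv_rhs => rw [ht]
  rw [idx_append_right (by simpa using ha), idx_cons]
  simp

private lemma ValidPref.prefLt_none_iff {p : List (Option S)} (hp : ValidPref p)
    {a : S} : prefLt p (some a) none ↔ a ∈ acceptables p := by
  constructor
  · intro h
    by_contra hmem
    have h1 := hp.indexOf_some_not_mem hmem
    rw [prefLt, hp.indexOf_none] at h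
    omega
  · intro h
    rw [prefLt, hp.indexOf_none, hp.indexOf_some_mem h]
    exact idx_lt_length.2 h

private lemma ValidPref.prefLt_some_some {p : List (Option S)} (hp : ValidPref p)
    {a b : S} (hb : b ∈ acceptables p) :
    prefLt p (some a) (some b) ↔
      a ∈ acceptables p ∧ (acceptables p).idxOf a < (acceptables p).idxOf b := by
  constructor
  · intro h
    have hab : a ∈ acceptables p := by
      by_contra hmem
      have h1 := hp.indexOf_some_not_mem hmem
      have h2 : (acceptables p).idxOf b < (acceptables p).length := idx_lt_length.2 hb
      rw [prefLt, hp.indexOf_some_mem hb] at h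
      omega
    rw [prefLt, hp.indexOf_some_mem hb, hp.indexOf_some_mem hab] at h
    exact ⟨hab, h⟩
  · intro ⟨ha, h⟩
    rw [prefLt, hp.indexOf_some_mem hb, hp.indexOf_some_mem ha]
    exact h

private lemma ValidPref.not_prefLt_none_some {p : List (Option S)} (hp : ValidPref p)
    {a : S} (ha : a ∈ acceptables p) : ¬ prefLt p none (some a) := by
  rw [prefLt, hp.indexOf_none, hp.indexOf_some_mem ha, not_lt]
  exact le_of_lt (idx_lt_length.2 ha)

/-! ### Truncation lemmas -/

private lemma acceptables_truncate (p : List (Option S)) (k : ℕ) :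
    acceptables (truncate p k) = (acceptables p).take k := by
  rw [truncate]; exact acceptables_shape _ _

private lemma ValidPref.truncate_valid {p : List (Option S)} (hp : ValidPref p) (k : ℕ) :
    ValidPref (truncate p k) := by
  constructor
  · rw [truncate, List.nodup_append]
    refine ⟨?_, ?_, ?_⟩
    · exact (hp.nodup_acceptables.sublist (List.take_sublist _ _)).map
        (Option.some_injective S)
    · rw [List.nodup_cons]
      constructor
      · intro hmem
        have := (List.mem_filter.mp hmem).2
        simp at this
      · exact hp.1.filter _
    · intro x hx y hx2 hxy; subst hxy
      rcases List.mem_cons.mp hx2 with h | h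
      · subst h
        rcases List.mem_map.mp hx with ⟨a, -, ha⟩
        exact Option.some_ne_none a ha
      · have := (List.mem_filter.mp h).2
        rw [decide_eq_true_iff] at this
        exact this.2 hx
  · intro x
    rw [truncate, List.mem_append, List.mem_cons]
    by_cases h1 : x ∈ ((acceptables p).take k).map some
    · exact Or.inl h1
    by_cases h2 : x = none
    · exact Or.inr (Or.inl h2)
    · refine Or.inr (Or.inr (List.mem_filter.mpr ⟨hp.2 x, ?_⟩))
      rw [decide_eq_true_iff]
      exact ⟨h2, h1⟩

private lemma indexOf_take {l : List S} {a : S} {k : ℕ} (h : a ∈ l.take k) :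
    l.idxOf a = (l.take k).idxOf a := by
  conv_lhs => rw [← List.take_append_drop k l]
  exact idx_append_left h _

/-- Transfer of strict preference from the truncated to the original relation. -/
private lemma ValidPref.prefLt_of_truncate {p : List (Option S)} (hp : ValidPref p)
    {k : ℕ} {s : S} {y : Option S}
    (hy : y = none ∨ ∃ t, y = some t ∧ t ∈ (acceptables p).take k)
    (h : prefLt (truncate p k) (some s) y) : prefLt p (some s) y := by
  have hpt := hp.truncate_valid k
  rcases hy with rfl | ⟨t, rfl, ht⟩
  · have hs : s ∈ acceptables (truncate p k) := hpt.prefLt_none_iff.mp h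
    rw [acceptables_truncate] at hs
    exact hp.prefLt_none_iff.mpr (List.mem_of_mem_take hs)
  · have ht' : t ∈ acceptables (truncate p k) := by rw [acceptables_truncate]; exact ht
    obtain ⟨hs, hlt⟩ := (hpt.prefLt_some_some ht').mp h
    rw [acceptables_truncate] at hs hlt
    refine (hp.prefLt_some_some (List.mem_of_mem_take ht)).mpr
      ⟨List.mem_of_mem_take hs, ?_⟩
    rw [indexOf_take hs, indexOf_take ht]
    exact hlt

end Aux

/-! ### Deferred acceptance: generic lemmas -/

section GSLemmas
set_option linter.unusedSectionVars false

variable {I S : Type*} [Fintype I] [DecidableEq I] [Fintype S] [DecidableEq S]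

/-- The state of deferred acceptance after `n` rounds. -/
private def daIter (Q : I → List (Option S)) (pr : S → List I) (q : S → ℕ) (n : ℕ) :
    I → ℕ :=
  (daStep Q pr q)^[n] (fun _ => 0)

/-- The number of rounds used by `GS`. -/
private def daN (I S : Type*) [Fintype I] [Fintype S] : ℕ :=
  Fintype.card I * Fintype.card S + 1

private lemma GS_def (Q : I → List (Option S)) (pr : S → List I) (q : S → ℕ) (i : I) :
    GS Q pr q i =
      match daTarget Q (daIter Q pr q (daN I S)) i with
      | none => none
      | some s => if i ∈ daHeld Q pr q (daIter Q pr q (daN I S)) s then some s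
                  else none := rfl

private lemma daStep_cases (Q : I → List (Option S)) (pr : S → List I) (q : S → ℕ)
    (σ : I → ℕ) (i : I) :
    daStep Q pr q σ i = σ i ∨
      (daStep Q pr q σ i = σ i + 1 ∧
        ∃ s, daTarget Q σ i = some s ∧ i ∉ daHeld Q pr q σ s) := by
  unfold daStep
  cases ht : daTarget Q σ i with
  | none => exact Or.inl rfl
  | some s =>
    by_cases hh : i ∈ daHeld Q pr q σ s
    · exact Or.inl (by simp [hh])
    · exact Or.inr ⟨by simp [hh], s, rfl, hh⟩

private lemma daStep_le (Q : I → List (Option S)) (pr : S → List I) (q : S → ℕ)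
    {σ : I → ℕ} (h : ∀ i, σ i ≤ (acceptables (Q i)).length) (i : I) :
    daStep Q pr q σ i ≤ (acceptables (Q i)).length := by
  rcases daStep_cases Q pr q σ i with h1 | ⟨h1, s, hs, -⟩
  · rw [h1]; exact h i
  · rw [h1]
    have : σ i < (acceptables (Q i)).length := by
      rw [daTarget] at hs
      exact (List.getElem?_eq_some_iff.mp hs).1
    omega

private lemma daIter_le' (Q : I → List (Option S)) (pr : S → List I) (q : S → ℕ)
    (n : ℕ) : ∀ i, daIter Q pr q n i ≤ (acceptables (Q i)).length := by
  induction n with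
  | zero => intro i; simp [daIter]
  | succ n ih =>
    intro i
    rw [daIter, Function.iterate_succ_apply']
    exact daStep_le Q pr q ih i

private lemma daStep_mono (Q : I → List (Option S)) (pr : S → List I) (q : S → ℕ)
    (σ : I → ℕ) (i : I) : σ i ≤ daStep Q pr q σ i := by
  rcases daStep_cases Q pr q σ i with h1 | ⟨h1, -⟩ <;> omega

private lemma daIter_fix (Q : I → List (Option S)) (pr : S → List I) (q : S → ℕ)
    (hQ : ∀ i, ValidPref (Q i)) :
    daStep Q pr q (daIter Q pr q (daN I S)) = daIter Q pr q (daN I S) := by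
  set f := daStep Q pr q with hf
  have key : ∀ n, (∀ m < n, f ((f)^[m] (fun _ => 0)) ≠ (f)^[m] (fun _ => 0)) →
      n ≤ ∑ i : I, (f)^[n] (fun _ => 0) i := by
    intro n
    induction n with
    | zero => intro _; omega
    | succ n ih =>
      intro h
      have h1 : n ≤ ∑ i : I, (f)^[n] (fun _ => 0) i :=
        ih (fun m hm => h m (by omega))
      have h2 : f ((f)^[n] (fun _ => 0)) ≠ (f)^[n] (fun _ => 0) := h n (by omega)
      have h3 : ∑ i : I, (f)^[n] (fun _ => 0) i < ∑ i : I, f ((f)^[n] (fun _ => 0)) i := by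
        apply Finset.sum_lt_sum
        · intro i _; exact daStep_mono Q pr q _ i
        · by_contra hc
          push_neg at hc
          apply h2
          funext i
          exact le_antisymm (hc i (Finset.mem_univ i)) (daStep_mono Q pr q _ i)
      rw [Function.iterate_succ_apply']
      omega
  by_cases hex : ∀ m < daN I S, f ((f)^[m] (fun _ => 0)) ≠ (f)^[m] (fun _ => 0)
  · exfalso
    have h1 := key (daN I S) hex
    have h2 : ∑ i : I, (f)^[daN I S] (fun _ => 0) i ≤
        Fintype.card I * Fintype.card S := by
      calc ∑ i : I, (f)^[daN I S] (fun _ => 0) i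
          ≤ ∑ _i : I, Fintype.card S := by
            apply Finset.sum_le_sum
            intro i _
            have ha := daIter_le' Q pr q (daN I S) i
            rw [daIter] at ha
            exact le_trans ha ((hQ i).nodup_acceptables.length_le_card)
        _ = Fintype.card I * Fintype.card S := by
            simp [Finset.sum_const, Finset.card_univ, Nat.smul_one_eq_cast]
    simp only [daN] at h1 h2
    omega
  · push_neg at hex
    obtain ⟨m, hm, hfix⟩ := hex
    have : ∀ n, m ≤ n → (f)^[n] (fun _ => 0) = (f)^[m] (fun _ => 0) := by
      intro n hn
      obtain ⟨d, rfl⟩ := Nat.exists_eq_add_of_le hn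
      rw [Nat.add_comm, Function.iterate_add_apply]
      exact Function.iterate_fixed hfix d
    rw [daIter, this (daN I S) (by omega)]
    exact hfix

private lemma fix_held (Q : I → List (Option S)) (pr : S → List I) (q : S → ℕ)
    {σ : I → ℕ} (hfix : daStep Q pr q σ = σ) {i : I} {s : S}
    (ht : daTarget Q σ i = some s) : i ∈ daHeld Q pr q σ s := by
  have := congrFun hfix i
  unfold daStep at this
  rw [ht] at this
  by_contra hh
  simp [hh] at this

private lemma GS_apply (Q : I → List (Option S)) (pr : S → List I) (q : S → ℕ)
    (hQ : ∀ i, ValidPref (Q i)) (i : I) :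
    GS Q pr q i = daTarget Q (daIter Q pr q (daN I S)) i := by
  rw [GS_def]
  cases ht : daTarget Q (daIter Q pr q (daN I S)) i with
  | none => rfl
  | some s => simp [fix_held Q pr q (daIter_fix Q pr q hQ) ht]

private lemma GS_some_iff (Q : I → List (Option S)) (pr : S → List I) (q : S → ℕ)
    (hQ : ∀ i, ValidPref (Q i)) {i : I} {s : S} :
    GS Q pr q i = some s ↔
      daTarget Q (daIter Q pr q (daN I S)) i = some s ∧
        i ∈ daHeld Q pr q (daIter Q pr q (daN I S)) s := by
  rw [GS_apply Q pr q hQ]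
  constructor
  · intro h
    exact ⟨h, fix_held Q pr q (daIter_fix Q pr q hQ) h⟩
  · exact fun h => h.1

private lemma GS_matching (Q : I → List (Option S)) (pr : S → List I) (q : S → ℕ)
    (hQ : ∀ i, ValidPref (Q i)) : IsMatching q (GS Q pr q) := by
  intro s
  set held := daHeld Q pr q (daIter Q pr q (daN I S)) s with hheld
  have hsub : Finset.univ.filter (fun i => GS Q pr q i = some s) ⊆ held.toFinset := by
    intro j hj
    rw [Finset.mem_filter] at hj
    rw [List.mem_toFinset]
    exact ((GS_some_iff Q pr q hQ).mp hj.2).2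
  calc (Finset.univ.filter (fun i => GS Q pr q i = some s)).card
      ≤ held.toFinset.card := Finset.card_le_card hsub
    _ ≤ held.length := held.toFinset_card_le
    _ ≤ q s := by rw [hheld, daHeld]; exact (List.length_take_le _ _).trans le_rfl

private lemma GS_range (Q : I → List (Option S)) (pr : S → List I) (q : S → ℕ)
    (hQ : ∀ i, ValidPref (Q i)) {i : I} {s : S} (h : GS Q pr q i = some s) :
    s ∈ acceptables (Q i) := by
  have := ((GS_some_iff Q pr q hQ).mp h).1
  rw [daTarget] at this
  exact List.mem_of_getElem? this

end GSLemmas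

/-! ### Stability of deferred acceptance under a common priority order -/

section GSCommon
set_option linter.unusedSectionVars false

variable {I S : Type*} [Fintype I] [DecidableEq I] [Fintype S] [DecidableEq S]
variable (Q : I → List (Option S)) (L : List I) (q : S → ℕ)

private lemma exists_cross {g : ℕ → ℕ} (h0 : g 0 = 0)
    (hstep : ∀ n, g (n+1) = g n ∨ g (n+1) = g n + 1) {N r : ℕ} (h : r < g N) :
    ∃ n < N, g n = r ∧ g (n+1) = g n + 1 := by
  induction N with
  | zero => omega
  | succ N ih =>
    by_cases hN : r < g N
    · obtain ⟨n, hn, h1, h2⟩ := ih hN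
      exact ⟨n, by omega, h1, h2⟩
    · rcases hstep N with h1 | h1
      · omega
      · exact ⟨N, by omega, by omega, h1⟩

private lemma inv_base {n : ℕ} {i : I} {s : S} {bef aft : List I}
    (hL : L = bef ++ i :: aft)
    (ht : daTarget Q (daIter Q (fun _ => L) q n) i = some s)
    (hh : i ∉ daHeld Q (fun _ => L) q (daIter Q (fun _ => L) q n) s) :
    q s ≤ (bef.filter
      (fun j => decide (daTarget Q (daIter Q (fun _ => L) q n) j = some s))).length := by
  set σ := daIter Q (fun _ => L) q n with hσ
  set p := fun j => decide (daTarget Q σ j = some s) with hp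
  by_contra hlt
  push_neg at hlt
  apply hh
  show i ∈ (L.filter p).take (q s)
  rw [hL, List.filter_append, List.filter_cons_of_pos (by simp [hp, ht]),
    List.take_append]
  refine List.mem_append_right _ ?_
  obtain ⟨m, hm⟩ : ∃ m, q s - (bef.filter p).length = m + 1 :=
    ⟨q s - (bef.filter p).length - 1, by omega⟩
  rw [hm, List.take_succ_cons]
  exact List.mem_cons_self

private lemma inv_step {n : ℕ} {i : I} {s : S} {bef aft : List I}
    (hnd : L.Nodup) (hL : L = bef ++ i :: aft)
    (hinv : q s ≤ (bef.filter
      (fun j => decide (daTarget Q (daIter Q (fun _ => L) q n) j = some s))).length) :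
    q s ≤ (bef.filter
      (fun j => decide (daTarget Q (daIter Q (fun _ => L) q (n+1)) j = some s))).length := by
  set σ := daIter Q (fun _ => L) q n with hσ
  set p := fun j => decide (daTarget Q σ j = some s) with hp
  set p' := fun j => decide (daTarget Q (daIter Q (fun _ => L) q (n+1)) j = some s) with hp'
  set held := daHeld Q (fun _ => L) q σ s with hhelddef
  have hheld : held = (bef.filter p).take (q s) := by
    show (L.filter p).take (q s) = _
    rw [hL, List.filter_append, List.take_append_of_le_length hinv]
  have hlen : held.length = q s := by
    rw [hheld, List.length_take]
    omega
  have hσ' : daIter Q (fun _ => L) q (n+1) = daStep Q (fun _ => L) q σ := by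
    rw [hσ, daIter, daIter, Function.iterate_succ_apply']
  have key : ∀ j ∈ held, j ∈ bef.filter p' := by
    intro j hj
    have hjf : j ∈ bef.filter p := List.mem_of_mem_take (hheld ▸ hj)
    have hjb : j ∈ bef := List.mem_of_mem_filter hjf
    have hpj : daTarget Q σ j = some s := by
      have := List.of_mem_filter hjf
      rwa [hp, decide_eq_true_iff] at this
    have hstay : daStep Q (fun _ => L) q σ j = σ j := by
      unfold daStep
      rw [hpj]
      simp [hhelddef ▸ hj]
    have : daTarget Q (daIter Q (fun _ => L) q (n+1)) j = some s := by
      rw [hσ', daTarget, hstay]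
      exact hpj
    exact List.mem_filter.mpr ⟨hjb, by simp [hp', this]⟩
  have hnodup : held.Nodup := by
    refine List.Nodup.sublist ?_ hnd
    exact (List.take_sublist _ _).trans (List.filter_sublist)
  calc q s = held.length := hlen.symm
    _ ≤ (bef.filter p').length := (hnodup.subperm key).length_le

private lemma inv_persist {n m : ℕ} {i : I} {s : S} {bef aft : List I}
    (hnd : L.Nodup) (hL : L = bef ++ i :: aft) (hnm : n ≤ m)
    (hinv : q s ≤ (bef.filter
      (fun j => decide (daTarget Q (daIter Q (fun _ => L) q n) j = some s))).length) :
    q s ≤ (bef.filter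
      (fun j => decide (daTarget Q (daIter Q (fun _ => L) q m) j = some s))).length := by
  obtain ⟨d, rfl⟩ := Nat.exists_eq_add_of_le hnm
  clear hnm
  induction d with
  | zero => simpa using hinv
  | succ d ih =>
    have he : n + (d+1) = (n+d)+1 := by omega
    rw [he]
    exact inv_step Q L q hnd hL ih

private lemma final_full (hQ : ∀ i, ValidPref (Q i)) {i : I} {s : S} {bef aft : List I}
    (hnd : L.Nodup) (hL : L = bef ++ i :: aft)
    (hinv : q s ≤ (bef.filter
      (fun j => decide (daTarget Q (daIter Q (fun _ => L) q (daN I S)) j = some s))).length) :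
    (Finset.univ.filter (fun j => GS Q (fun _ => L) q j = some s)).card = q s ∧
      ∀ j, GS Q (fun _ => L) q j = some s → L.idxOf j < L.idxOf i := by
  set σ := daIter Q (fun _ => L) q (daN I S) with hσ
  set p := fun j => decide (daTarget Q σ j = some s) with hp
  set held := daHeld Q (fun _ => L) q σ s with hhelddef
  have hheld : held = (bef.filter p).take (q s) := by
    show (L.filter p).take (q s) = _
    rw [hL, List.filter_append, List.take_append_of_le_length hinv]
  have hlen : held.length = q s := by
    rw [hheld, List.length_take]; omega
  have hnodup : held.Nodup := by
    refine List.Nodup.sublist ?_ hnd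
    exact (List.take_sublist _ _).trans (List.filter_sublist)
  have hiff : ∀ j, GS Q (fun _ => L) q j = some s ↔ j ∈ held := by
    intro j
    constructor
    · intro h
      exact ((GS_some_iff Q (fun _ => L) q hQ).mp h).2
    · intro hj
      have hjf : j ∈ L.filter p := List.mem_of_mem_take hj
      have hpj : daTarget Q σ j = some s := by
        have := List.of_mem_filter hjf
        rwa [hp, decide_eq_true_iff] at this
      exact (GS_some_iff Q (fun _ => L) q hQ).mpr ⟨hpj, hj⟩
  have hibef : i ∉ bef := by
    have := hnd
    rw [hL, List.nodup_append] at this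
    exact fun hmem => this.2.2 _ hmem _ List.mem_cons_self rfl
  constructor
  · have hset : Finset.univ.filter (fun j => GS Q (fun _ => L) q j = some s)
        = held.toFinset := by
      ext j
      simp only [Finset.mem_filter, Finset.mem_univ, true_and, List.mem_toFinset]
      exact hiff j
    rw [hset, List.toFinset_card_of_nodup hnodup, hlen]
  · intro j hj
    have hjb : j ∈ bef := List.mem_of_mem_filter (List.mem_of_mem_take (hheld ▸ (hiff j).mp hj))
    rw [hL, idx_append_left hjb, idx_append_right hibef, idx_cons]
    simp only [if_pos rfl, Nat.add_zero]
    exact idx_lt_length.2 hjb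

private theorem GS_stable_common (hQ : ∀ i, ValidPref (Q i))
    (hnd : L.Nodup) (hmem : ∀ i : I, i ∈ L) :
    IsStable Q (fun _ => L) q (GS Q (fun _ => L) q) := by
  constructor
  · intro i
    cases h : GS Q (fun _ => L) q i with
    | none => simp [prefLt]
    | some s => exact (hQ i).not_prefLt_none_some (GS_range Q (fun _ => L) q hQ h)
  · rintro i ⟨s, hpref, hblock⟩
    obtain ⟨bef, aft, hL⟩ := List.append_of_mem (hmem i)
    set σN := daIter Q (fun _ => L) q (daN I S) with hσN
    have hv : GS Q (fun _ => L) q i = (acceptables (Q i))[σN i]? :=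
      GS_apply Q (fun _ => L) q hQ i
    -- extract the rank of s
    have hrank : s ∈ acceptables (Q i) ∧ (acceptables (Q i)).idxOf s < σN i := by
      cases hAg : (acceptables (Q i))[σN i]? with
      | none =>
        have hlen : (acceptables (Q i)).length ≤ σN i := List.getElem?_eq_none_iff.mp hAg
        rw [hv, hAg] at hpref
        have hs : s ∈ acceptables (Q i) := (hQ i).prefLt_none_iff.mp hpref
        exact ⟨hs, lt_of_lt_of_le (idx_lt_length.2 hs) hlen⟩
      | some t =>
        rw [hv, hAg] at hpref
        obtain ⟨hlt, hteq⟩ := List.getElem?_eq_some_iff.mp hAg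
        have ht : t ∈ acceptables (Q i) := List.mem_of_getElem? hAg
        obtain ⟨hs, hst⟩ := ((hQ i).prefLt_some_some ht).mp hpref
        have : (acceptables (Q i)).idxOf t = σN i := by
          rw [← hteq]
          exact idx_getElem_nodup (hQ i).nodup_acceptables hlt
        exact ⟨hs, by omega⟩
    obtain ⟨hs, hr⟩ := hrank
    -- find the round where i was rejected by s
    have hstep : ∀ n, daIter Q (fun _ => L) q (n+1) i = daIter Q (fun _ => L) q n i ∨
        daIter Q (fun _ => L) q (n+1) i = daIter Q (fun _ => L) q n i + 1 := by
      intro n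
      rw [daIter, daIter, Function.iterate_succ_apply']
      rcases daStep_cases Q (fun _ => L) q ((daStep Q (fun _ => L) q)^[n] fun _ => 0) i with
        h | ⟨h, -⟩
      · exact Or.inl h
      · exact Or.inr h
    obtain ⟨n, hn, hgn, hgn1⟩ := exists_cross (g := fun n => daIter Q (fun _ => L) q n i)
      (by simp [daIter]) hstep hr
    have hreject : daTarget Q (daIter Q (fun _ => L) q n) i = some s ∧
        i ∉ daHeld Q (fun _ => L) q (daIter Q (fun _ => L) q n) s := by
      have hne : daStep Q (fun _ => L) q (daIter Q (fun _ => L) q n) i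
          ≠ daIter Q (fun _ => L) q n i := by
        have h1 : daStep Q (fun _ => L) q (daIter Q (fun _ => L) q n) i
            = daIter Q (fun _ => L) q (n+1) i := by
          rw [daIter, daIter, Function.iterate_succ_apply']
        rw [h1]
        omega
      rcases daStep_cases Q (fun _ => L) q (daIter Q (fun _ => L) q n) i with
        h | ⟨-, s', hs', hh'⟩
      · rw [daIter] at h hne; exact absurd h hne
      · have : s' = s := by
          rw [daTarget, hgn] at hs'
          rw [idx_getElem? hs] at hs'
          exact (Option.some_injective _ hs').symm
        subst this
        exact ⟨hs', hh'⟩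
    have hinvn := inv_base Q L q hL hreject.1 hreject.2
    have hinvN := inv_persist Q L q hnd hL (le_of_lt hn) hinvn
    obtain ⟨hcard, hord⟩ := final_full Q L q hQ hnd hL hinvN
    rcases hblock with hc | ⟨j, hj, hpj⟩
    · rw [hcard] at hc
      exact lt_irrefl _ hc
    · have := hord j hj
      have hpj' : List.idxOf i L < List.idxOf j L := hpj
      omega

end GSCommon

/-! ### Uniqueness of the stable matching under a common priority order -/

section Unique
set_option linter.unusedSectionVars false

variable {I S : Type*} [Fintype I] [DecidableEq I] [Fintype S] [DecidableEq S]
variable (Q : I → List (Option S)) (L : List I) (q : S → ℕ)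

/-- Number of students matched to `s` with higher priority than `i`. -/
private def earl (μ : I → Option S) (i : I) (s : S) : ℕ :=
  (Finset.univ.filter (fun j => μ j = some s ∧ L.idxOf j < L.idxOf i)).card

private lemma stable_earl_lt {μ : I → Option S} (hm : IsMatching q μ)
    (hst : IsStable Q (fun _ => L) q μ) (hnd : L.Nodup) (hmem : ∀ i : I, i ∈ L)
    {i : I} {s : S} (h : μ i = some s) : earl L μ i s < q s := by
  set Ms := Finset.univ.filter (fun j => μ j = some s) with hMs
  have hiMs : i ∈ Ms := by simp [hMs, h]
  have hsub : Finset.univ.filter (fun j => μ j = some s ∧ L.idxOf j < L.idxOf i)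
      ⊆ Ms := by
    intro j hj
    rw [Finset.mem_filter] at hj
    simp [hMs, hj.2.1]
  have hne : i ∉ Finset.univ.filter (fun j => μ j = some s ∧ L.idxOf j < L.idxOf i) := by
    simp
  have hss : Finset.univ.filter (fun j => μ j = some s ∧ L.idxOf j < L.idxOf i)
      ⊂ Ms := ⟨hsub, fun hcon => hne (hcon hiMs)⟩
  calc earl L μ i s < Ms.card := Finset.card_lt_card hss
    _ ≤ q s := hm s

private lemma stable_earl_ge {μ : I → Option S}
    (hst : IsStable Q (fun _ => L) q μ) (hnd : L.Nodup) (hmem : ∀ i : I, i ∈ L)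
    {i : I} {s : S} (h : prefLt (Q i) (some s) (μ i)) : q s ≤ earl L μ i s := by
  have hnb := hst.2 i
  rw [BlockingStudent] at hnb
  push_neg at hnb
  have hb := hnb s
  rw [Blocks] at hb
  push_neg at hb
  obtain ⟨hcard, hjall⟩ := hb h
  have hsub : Finset.univ.filter (fun j => μ j = some s)
      ⊆ Finset.univ.filter (fun j => μ j = some s ∧ L.idxOf j < L.idxOf i) := by
    intro j hj
    rw [Finset.mem_filter] at hj ⊢
    refine ⟨hj.1, hj.2, ?_⟩
    have hji : j ≠ i := by
      intro hji
      subst hji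
      rw [hj.2] at h
      exact lt_irrefl _ h
    have hnp : ¬ prioLt ((fun _ => L) s) i j := hjall j hj.2
    have hnp' : ¬ List.idxOf i L < List.idxOf j L := hnp
    rcases lt_or_eq_of_le (not_lt.mp hnp') with hlt | heq
    · exact hlt
    · exact absurd (idx_inj (hmem j) (hmem i) heq) hji
  calc q s ≤ (Finset.univ.filter (fun j => μ j = some s)).card := hcard
    _ ≤ earl L μ i s := Finset.card_le_card hsub

private lemma stable_common_unique (hQ : ∀ i, ValidPref (Q i))
    (hnd : L.Nodup) (hmem : ∀ i : I, i ∈ L)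
    {μ ν : I → Option S} (hμm : IsMatching q μ) (hνm : IsMatching q ν)
    (hμ : IsStable Q (fun _ => L) q μ) (hν : IsStable Q (fun _ => L) q ν) : μ = ν := by
  have main : ∀ n : ℕ, ∀ i : I, L.idxOf i = n → μ i = ν i := by
    intro n
    induction n using Nat.strong_induction_on with
    | _ n ih =>
      intro i hi
      have hagree : ∀ j, L.idxOf j < L.idxOf i → μ j = ν j := by
        intro j hj
        exact ih (L.idxOf j) (hi ▸ hj) j rfl
      have hearl : ∀ s, earl L μ i s = earl L ν i s := by
        intro s
        unfold earl
        congr 1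
        apply Finset.filter_congr
        intro j _
        constructor
        · rintro ⟨h1, h2⟩; exact ⟨(hagree j h2) ▸ h1, h2⟩
        · rintro ⟨h1, h2⟩; exact ⟨(hagree j h2).symm ▸ h1, h2⟩
      -- neither is preferred to the other
      have key : ∀ (α β : I → Option S), IsMatching q α → IsMatching q β →
          IsStable Q (fun _ => L) q α → IsStable Q (fun _ => L) q β →
          (∀ s, earl L α i s = earl L β i s) →
          ¬ prefLt (Q i) (β i) (α i) := by
        intro α β hαm hβm hα hβ he
        cases hb : β i with
        | none => exact hα.1 i
        | some s =>
          intro hpref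
          have h1 := stable_earl_ge Q L q hα hnd hmem hpref
          have h2 := stable_earl_lt Q L q hβm hβ hnd hmem hb
          rw [he s] at h1
          omega
      have h1 : ¬ prefLt (Q i) (ν i) (μ i) :=
        key μ ν hμm hνm hμ hν hearl
      have h2 : ¬ prefLt (Q i) (μ i) (ν i) :=
        key ν μ hνm hμm hν hμ (fun s => (hearl s).symm)
      rw [prefLt] at h1 h2
      exact idx_inj ((hQ i).2 (μ i)) ((hQ i).2 (ν i)) (by omega)
  funext i
  exact main (L.idxOf i) i rfl

end Unique

/-! ### Part (i) -/

section PartOne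
set_option linter.unusedSectionVars false

variable {I S : Type*} [Fintype I] [DecidableEq I] [Fintype S] [DecidableEq S]

private theorem part_one (fpf : Finset S) (k : ℕ) (L : List I)
    (P : I → List (Option S)) (q : S → ℕ)
    (hP : ∀ i, ValidPref (P i)) (hnd : L.Nodup) (hmem : ∀ i : I, i ∈ L)
    (hstab : IsStable P (fun _ => L) q (FPFk fpf k P (fun _ => L) q)) :
    IsStable P (fun _ => L) q (GSk k P (fun _ => L) q) := by
  set Q : I → List (Option S) := fun i => truncate (P i) k with hQdef
  have hQ : ∀ i, ValidPref (Q i) := fun i => (hP i).truncate_valid k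
  set μ' := GS Q (fpfPrio fpf Q (fun _ => L)) q with hμ'
  have hstab' : IsStable P (fun _ => L) q μ' := hstab
  have h1 : IsMatching q μ' := GS_matching _ _ _ hQ
  have hrange : ∀ i t, μ' i = some t → t ∈ (acceptables (P i)).take k := by
    intro i t h
    have := GS_range _ _ _ hQ h
    rwa [hQdef, acceptables_truncate] at this
  have h3 : IsStable Q (fun _ => L) q μ' := by
    constructor
    · intro i
      cases h : μ' i with
      | none => simp [h, prefLt]
      | some t =>
        exact (hQ i).not_prefLt_none_some (GS_range _ _ _ hQ h)
    · rintro i ⟨s, hpref, hbl⟩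
      have hpl : prefLt (P i) (some s) (μ' i) := by
        cases h : μ' i with
        | none =>
          rw [h] at hpref
          exact (hP i).prefLt_of_truncate (Or.inl rfl) hpref
        | some t =>
          rw [h] at hpref
          exact (hP i).prefLt_of_truncate (Or.inr ⟨t, rfl, hrange i t h⟩) hpref
      exact hstab'.2 i ⟨s, hpl, hbl⟩
  have h2 : IsMatching q (GS Q (fun _ => L) q) := GS_matching _ _ _ hQ
  have h4 : IsStable Q (fun _ => L) q (GS Q (fun _ => L) q) :=
    GS_stable_common Q L q hQ hnd hmem
  have h5 : GS Q (fun _ => L) q = μ' :=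
    stable_common_unique Q L q hQ hnd hmem h2 h1 h4 h3
  have hGSk : GSk k P (fun _ => L) q = μ' := h5
  rw [hGSk]
  exact hstab'

end PartOne

/-! ### Part (ii): helper lemmas -/

section PartTwoHelpers
set_option linter.unusedSectionVars false

variable {I S : Type*} [Fintype I] [DecidableEq I] [Fintype S] [DecidableEq S]

private lemma filter_take_one {M : List I} {p : I → Bool} {a : I}
    (ha : a ∈ M) (hpa : p a = true) (h : ∀ x ∈ M, p x = true → x = a) :
    (M.filter p).take 1 = [a] := by
  have h1 : M.filter p = List.replicate (M.filter p).length a :=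
    List.eq_replicate_of_mem
      (fun b hb => h b (List.mem_of_mem_filter hb) (List.of_mem_filter hb))
  have h2 : a ∈ M.filter p := List.mem_filter.mpr ⟨ha, hpa⟩
  have h3 : 1 ≤ (M.filter p).length := List.length_pos_iff.mpr (List.ne_nil_of_mem h2)
  obtain ⟨m, hm⟩ : ∃ m, (M.filter p).length = m + 1 := ⟨(M.filter p).length - 1, by omega⟩
  rw [h1, hm, List.take_replicate]
  simp

private lemma filter_eq_singleton {M : List I} {p : I → Bool} {a : I}
    (hnd : M.Nodup) (ha : a ∈ M) (hpa : p a = true) (h : ∀ x ∈ M, p x = true → x = a) :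
    M.filter p = [a] := by
  have h1 : M.filter p = List.replicate (M.filter p).length a :=
    List.eq_replicate_of_mem
      (fun b hb => h b (List.mem_of_mem_filter hb) (List.of_mem_filter hb))
  have h2 : a ∈ M.filter p := List.mem_filter.mpr ⟨ha, hpa⟩
  have h3 : 1 ≤ (M.filter p).length := List.length_pos_iff.mpr (List.ne_nil_of_mem h2)
  have h4 : (M.filter p).Nodup := hnd.filter p
  rw [h1] at h4
  rw [List.nodup_replicate] at h4
  have h5 : (M.filter p).length = 1 := by omega
  rw [h1, h5]
  rfl

/-- A valid preference list has length `card S + 1`. -/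
private lemma ValidPref.length_eq {p : List (Option S)} (hp : ValidPref p) :
    p.length = Fintype.card S + 1 := by
  have h1 : p.toFinset = Finset.univ := Finset.eq_univ_iff_forall.mpr
    (fun x => List.mem_toFinset.mpr (hp.2 x))
  have h2 := List.toFinset_card_of_nodup hp.1
  rw [h1] at h2
  rw [← h2, Finset.card_univ, Fintype.card_option]

private lemma mem_fpfPrio {fpf : Finset S} {Q : I → List (Option S)} {L : List I}
    {s : S} (hs : s ∈ fpf) (hQ : ∀ i, ValidPref (Q i)) (hmem : ∀ i : I, i ∈ L)
    (j : I) : j ∈ fpfPrio fpf Q (fun _ => L) s := by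
  rw [fpfPrio, if_pos hs]
  rw [List.mem_flatMap]
  refine ⟨(Q j).idxOf (some s), ?_, ?_⟩
  · rw [List.mem_range]
    have h1 : (Q j).idxOf (some s) < (Q j).length := idx_lt_length.2 ((hQ j).2 (some s))
    rw [(hQ j).length_eq] at h1
    omega
  · exact List.mem_filter.mpr ⟨hmem j, by simp⟩

/-- Computation of the filtered fpf priority list when exactly two students,
of ranks 0 and 1, satisfy the predicate. -/
private lemma fpfPrio_filter_two {fpf : Finset S} {Q : I → List (Option S)} {L : List I}
    {s : S} (hs : s ∈ fpf) (hQ : ∀ i, ValidPref (Q i))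
    (hnd : L.Nodup) (hmem : ∀ i : I, i ∈ L)
    {p : I → Bool} {a b : I} (hab : a ≠ b)
    (hra : (Q a).idxOf (some s) = 0) (hrb : (Q b).idxOf (some s) = 1)
    (hpa : p a = true) (hpb : p b = true)
    (h : ∀ x, p x = true → x = a ∨ x = b) :
    (fpfPrio fpf Q (fun _ => L) s).filter p = [a, b] := by
  rw [fpfPrio, if_pos hs, List.filter_flatMap]
  obtain ⟨m, hm⟩ : ∃ m, Fintype.card S + 1 = m + 2 :=
    ⟨Fintype.card S - 1, by have : 0 < Fintype.card S := Fintype.card_pos_iff.mpr ⟨s⟩; omega⟩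
  rw [hm, List.range_eq_range', List.range'_succ, List.range'_succ]
  rw [List.flatMap_cons, List.flatMap_cons]
  have hblock0 : (List.filter (fun i => decide ((Q i).idxOf (some s) = 0)) L).filter p
      = [a] := by
    rw [List.filter_filter]
    apply filter_eq_singleton hnd (hmem a) (by simp [hpa, hra])
    intro x _ hx
    simp only [Bool.and_eq_true, decide_eq_true_eq] at hx
    rcases h x hx.1 with rfl | rfl
    · rfl
    · rw [hrb] at hx; omega
  have hblock1 : (List.filter (fun i => decide ((Q i).idxOf (some s) = 1)) L).filter p
      = [b] := by
    rw [List.filter_filter]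
    apply filter_eq_singleton hnd (hmem b) (by simp [hpb, hrb])
    intro x _ hx
    simp only [Bool.and_eq_true, decide_eq_true_eq] at hx
    rcases h x hx.1 with rfl | rfl
    · rw [hra] at hx; omega
    · rfl
  have hrest : (List.range' (0+1+1) m).flatMap
      (fun r => (List.filter (fun i => decide ((Q i).idxOf (some s) = r)) L).filter p)
      = [] := by
    rw [List.flatMap_eq_nil_iff]
    intro r hr
    rw [List.mem_range'_1] at hr
    rw [List.filter_filter, List.filter_eq_nil_iff]
    intro x _ hx
    simp only [Bool.and_eq_true, decide_eq_true_eq] at hx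
    rcases h x hx.1 with rfl | rfl
    · rw [hra] at hx; omega
    · rw [hrb] at hx; omega
  rw [hblock0, hblock1, hrest]
  rfl

/-- Completion of a partial preference list to a full one. -/
private noncomputable def completePref (front : List (Option S)) : List (Option S) :=
  front ++ (Finset.univ : Finset (Option S)).toList.filter (fun x => decide (x ∉ front))

private lemma completePref_valid {front : List (Option S)} (h : front.Nodup) :
    ValidPref (completePref front) := by
  constructor
  · rw [completePref, List.nodup_append]
    refine ⟨h, (Finset.nodup_toList _).filter _, ?_⟩
    intro x hx y hx2 hxy; subst hxy
    have := List.of_mem_filter hx2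
    rw [decide_eq_true_iff] at this
    exact this hx
  · intro x
    rw [completePref, List.mem_append]
    by_cases hx : x ∈ front
    · exact Or.inl hx
    · exact Or.inr (List.mem_filter.mpr
        ⟨Finset.mem_toList.mpr (Finset.mem_univ x), by simp [hx]⟩)

private lemma acceptables_completePref (l : List S) :
    acceptables (completePref (l.map some ++ [none])) = l := by
  rw [completePref, List.append_assoc]
  exact acceptables_shape l _

end PartTwoHelpers

/-! ### Part (ii): the counterexample -/

section PartTwo
set_option linter.unusedSectionVars false

variable {I S : Type*} [Fintype I] [DecidableEq I] [Fintype S] [DecidableEq S]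

private lemma daStep_none {Q : I → List (Option S)} {pr : S → List I} {q : S → ℕ}
    {σ : I → ℕ} {i : I} (h : daTarget Q σ i = none) : daStep Q pr q σ i = σ i := by
  unfold daStep; rw [h]

private lemma daStep_mem {Q : I → List (Option S)} {pr : S → List I} {q : S → ℕ}
    {σ : I → ℕ} {i : I} {s : S} (h : daTarget Q σ i = some s)
    (hm : i ∈ daHeld Q pr q σ s) : daStep Q pr q σ i = σ i := by
  unfold daStep; rw [h]; simp [hm]

private lemma daStep_not_mem {Q : I → List (Option S)} {pr : S → List I} {q : S → ℕ}
    {σ : I → ℕ} {i : I} {s : S} (h : daTarget Q σ i = some s)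
    (hm : i ∉ daHeld Q pr q σ s) : daStep Q pr q σ i = σ i + 1 := by
  unfold daStep; rw [h]; simp [hm]

private theorem part_two (fpf : Finset S) (hfpf : fpf.Nonempty) (k : ℕ) (hk : 1 < k)
    (hIS : Fintype.card S < Fintype.card I) (hS : 2 ≤ Fintype.card S) :
    ∃ (P : I → List (Option S)) (prio : S → List I) (q : S → ℕ),
      (∀ i, ValidPref (P i)) ∧ (∀ s, ValidPrio (prio s)) ∧
      (∀ s s' : S, prio s = prio s') ∧
      IsStable P prio q (GSk k P prio q) ∧
      ¬ IsStable P prio q (FPFk fpf k P prio q) := by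
  classical
  obtain ⟨s1, hs1⟩ := hfpf
  obtain ⟨s2, hs2⟩ : ∃ s2 : S, s2 ≠ s1 := Fintype.exists_ne_of_one_lt_card (by omega) s1
  obtain ⟨i1, i2, hi12⟩ : ∃ a b : I, a ≠ b := Fintype.exists_pair_of_one_lt_card (by omega)
  have hi21 : i2 ≠ i1 := hi12.symm
  set rest := ((Finset.univ.erase i1).erase i2).toList with hrest
  set L : List I := i1 :: i2 :: rest with hLdef
  have hi2rest : i2 ∉ rest := by
    intro h
    exact (Finset.notMem_erase _ _) (Finset.mem_toList.mp h)
  have hi1rest : i1 ∉ rest := by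
    intro h
    have h1 := Finset.mem_of_mem_erase (Finset.mem_toList.mp h)
    exact (Finset.notMem_erase _ _) h1
  have hLnd : L.Nodup := by
    rw [hLdef]
    refine List.nodup_cons.mpr ⟨?_, List.nodup_cons.mpr ⟨hi2rest, Finset.nodup_toList _⟩⟩
    rw [List.mem_cons]
    rintro (h | h)
    · exact hi12 h
    · exact hi1rest h
  have hLmem : ∀ i : I, i ∈ L := by
    intro i
    rw [hLdef, List.mem_cons, List.mem_cons]
    by_cases h1 : i = i1
    · exact Or.inl h1
    by_cases h2 : i = i2
    · exact Or.inr (Or.inl h2)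
    · exact Or.inr (Or.inr (Finset.mem_toList.mpr
        (Finset.mem_erase.mpr ⟨h2, Finset.mem_erase.mpr ⟨h1, Finset.mem_univ i⟩⟩)))
  set P : I → List (Option S) := fun i =>
    if i = i1 then completePref ([s2, s1].map some ++ [none])
    else if i = i2 then completePref ([s1].map some ++ [none])
    else completePref (([] : List S).map some ++ [none]) with hPdef
  set q : S → ℕ := fun s => if s = s1 then 1 else 0 with hqdef
  have hq1 : q s1 = 1 := by simp [hqdef]
  have hq0 : ∀ s, s ≠ s1 → q s = 0 := by intro s h; simp [hqdef, h]
  set Q : I → List (Option S) := fun i => truncate (P i) k with hQdef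
  have hP1 : P i1 = completePref ([s2, s1].map some ++ [none]) := by simp [hPdef]
  have hP2 : P i2 = completePref ([s1].map some ++ [none]) := by simp [hPdef, hi21]
  have hP0 : ∀ j, j ≠ i1 → j ≠ i2 →
      P j = completePref (([] : List S).map some ++ [none]) := by
    intro j h1 h2; simp [hPdef, h1, h2]
  have hP : ∀ i, ValidPref (P i) := by
    intro i
    rw [hPdef]
    dsimp only
    split_ifs with h1 h2
    · exact completePref_valid (by simp [hs2])
    · exact completePref_valid (by simp)
    · exact completePref_valid (by simp)
  have hA1 : acceptables (P i1) = [s2, s1] := by rw [hP1]; exact acceptables_completePref _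
  have hA2 : acceptables (P i2) = [s1] := by rw [hP2]; exact acceptables_completePref _
  have hA0 : ∀ j, j ≠ i1 → j ≠ i2 → acceptables (P j) = [] := by
    intro j h1 h2; rw [hP0 j h1 h2]; exact acceptables_completePref _
  have hQ : ∀ i, ValidPref (Q i) := fun i => (hP i).truncate_valid k
  have hAQ1 : acceptables (Q i1) = [s2, s1] := by
    show acceptables (truncate (P i1) k) = _
    rw [acceptables_truncate, hA1]
    exact List.take_of_length_le (by simp; omega)
  have hAQ2 : acceptables (Q i2) = [s1] := by
    show acceptables (truncate (P i2) k) = _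
    rw [acceptables_truncate, hA2]
    exact List.take_of_length_le (by simp; omega)
  have hAQ0 : ∀ j, j ≠ i1 → j ≠ i2 → acceptables (Q j) = [] := by
    intro j h1 h2
    show acceptables (truncate (P j) k) = _
    rw [acceptables_truncate, hA0 j h1 h2]
    simp
  have t : ∀ (σ : I → ℕ) (j : I), daTarget Q σ j = (acceptables (Q j))[σ j]? :=
    fun _ _ => rfl
  -- the four relevant states
  set σ1 : I → ℕ := fun i => if i = i1 then 1 else 0 with hσ1
  set σ2 : I → ℕ := fun i => if i = i1 then 1 else if i = i2 then 1 else 0 with hσ2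
  set σ2' : I → ℕ := fun i => if i = i1 then 2 else 0 with hσ2'
  -- targets at each state
  have t0 : ∀ j, daTarget Q (fun _ => 0) j =
      if j = i1 then some s2 else if j = i2 then some s1 else none := by
    intro j
    rw [t]
    by_cases h1 : j = i1
    · subst h1; rw [hAQ1]; simp
    · by_cases h2 : j = i2
      · subst h2; rw [hAQ2]; simp [h1]
      · rw [hAQ0 j h1 h2]; simp [h1, h2]
  have t1 : ∀ j, daTarget Q σ1 j =
      if j = i1 then some s1 else if j = i2 then some s1 else none := by
    intro j
    rw [t]
    by_cases h1 : j = i1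
    · subst h1; rw [hAQ1]; simp [hσ1]
    · by_cases h2 : j = i2
      · subst h2; rw [hAQ2]; simp [hσ1, h1]
      · rw [hAQ0 j h1 h2]; simp [h1, h2]
  have t2 : ∀ j, daTarget Q σ2 j =
      if j = i1 then some s1 else none := by
    intro j
    rw [t]
    by_cases h1 : j = i1
    · subst h1; rw [hAQ1]; simp [hσ2]
    · by_cases h2 : j = i2
      · subst h2; rw [hAQ2]; simp [hσ2, h1]
      · rw [hAQ0 j h1 h2]; simp [h1, h2]
  have t2' : ∀ j, daTarget Q σ2' j =
      if j = i2 then some s1 else none := by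
    intro j
    rw [t]
    by_cases h1 : j = i1
    · subst h1
      rw [hAQ1]
      simp [hσ2', hi12]
    · by_cases h2 : j = i2
      · subst h2; rw [hAQ2]; simp [hσ2', h1]
      · rw [hAQ0 j h1 h2]; simp [h1, h2]
  -- schools other than s1 hold nobody
  have heldq0 : ∀ (pr : S → List I) (σ : I → ℕ) (s : S), s ≠ s1 →
      daHeld Q pr q σ s = [] := by
    intro pr σ s hs
    show (List.filter _ (pr s)).take (q s) = []
    rw [hq0 s hs]
    simp
  ----------------------------------------------------------------
  -- the serial dictatorship run
  ----------------------------------------------------------------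
  have hh0 : daHeld Q (fun _ => L) q (fun _ => 0) s1 = [i2] := by
    show (L.filter _).take (q s1) = [i2]
    rw [hq1]
    apply filter_take_one (hLmem i2) (by simp [t0, hi21])
    intro x _ hx
    rw [decide_eq_true_iff, t0 x] at hx
    by_cases h1 : x = i1
    · rw [if_pos h1] at hx
      exact absurd (Option.some_injective _ hx) hs2
    · rw [if_neg h1] at hx
      by_cases h2 : x = i2
      · exact h2
      · rw [if_neg h2] at hx; exact absurd hx (by simp)
  have hh1 : daHeld Q (fun _ => L) q σ1 s1 = [i1] := by
    show (L.filter _).take (q s1) = [i1]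
    rw [hq1, hLdef, List.filter_cons_of_pos (by simp [t1])]
    simp
  have hh2 : daHeld Q (fun _ => L) q σ2 s1 = [i1] := by
    show (L.filter _).take (q s1) = [i1]
    rw [hq1, hLdef, List.filter_cons_of_pos (by simp [t2])]
    simp
  have step0 : daStep Q (fun _ => L) q (fun _ => 0) = σ1 := by
    funext j
    by_cases h1 : j = i1
    · subst h1
      rw [daStep_not_mem (s := s2) (by rw [t0]; simp) (by rw [heldq0 _ _ _ hs2]; simp)]
      simp [hσ1]
    · by_cases h2 : j = i2
      · subst h2
        rw [daStep_mem (s := s1) (by rw [t0]; simp [hi21]) (by rw [hh0]; simp)]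
        simp [hσ1, hi21]
      · rw [daStep_none (by rw [t0]; simp [h1, h2])]
        simp [hσ1, h1]
  have step1 : daStep Q (fun _ => L) q σ1 = σ2 := by
    funext j
    by_cases h1 : j = i1
    · subst h1
      rw [daStep_mem (s := s1) (by rw [t1]; simp) (by rw [hh1]; simp)]
      simp [hσ1, hσ2]
    · by_cases h2 : j = i2
      · subst h2
        rw [daStep_not_mem (s := s1) (by rw [t1]; simp [hi21]) (by rw [hh1]; simp [hi21])]
        simp [hσ1, hσ2, hi21]
      · rw [daStep_none (by rw [t1]; simp [h1, h2])]
        simp [hσ1, hσ2, h1, h2]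
  have step2 : daStep Q (fun _ => L) q σ2 = σ2 := by
    funext j
    by_cases h1 : j = i1
    · subst h1
      rw [daStep_mem (s := s1) (by rw [t2]; simp) (by rw [hh2]; simp)]
    · by_cases h2 : j = i2
      · subst h2
        rw [daStep_none (by rw [t2]; simp [hi21])]
      · rw [daStep_none (by rw [t2]; simp [h1])]
  have hprod : 2 ≤ Fintype.card I * Fintype.card S := by
    have := Nat.mul_le_mul (show 3 ≤ Fintype.card I by omega) hS
    omega
  obtain ⟨m, hm⟩ : ∃ m, daN I S = m + 2 := ⟨daN I S - 2, by rw [daN]; omega⟩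
  have hiterN : daIter Q (fun _ => L) q (daN I S) = σ2 := by
    have e2 : (daStep Q (fun _ => L) q)^[2] (fun _ => 0) = σ2 := by
      show daStep Q (fun _ => L) q (daStep Q (fun _ => L) q (fun _ => 0)) = σ2
      rw [step0, step1]
    rw [daIter, hm, Function.iterate_add_apply, e2]
    exact Function.iterate_fixed step2 m
  have hGS : ∀ j, GSk k P (fun _ => L) q j = if j = i1 then some s1 else none := by
    intro j
    show GS Q (fun _ => L) q j = _
    rw [GS_apply Q (fun _ => L) q hQ, hiterN, t2 j]
  ----------------------------------------------------------------
  -- the first-preference-first run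
  ----------------------------------------------------------------
  set pr' := fpfPrio fpf Q (fun _ => L) with hpr'
  have hrk1 : (Q i1).idxOf (some s1) = 1 := by
    rw [(hQ i1).indexOf_some_mem (by rw [hAQ1]; simp), hAQ1, idx_cons, if_neg hs2]
    simp [idx_cons]
  have hrk2 : (Q i2).idxOf (some s1) = 0 := by
    rw [(hQ i2).indexOf_some_mem (by rw [hAQ2]; simp), hAQ2]
    simp [idx_cons]
  have hh0' : daHeld Q pr' q (fun _ => 0) s1 = [i2] := by
    show ((pr' s1).filter _).take (q s1) = [i2]
    rw [hq1]
    apply filter_take_one (mem_fpfPrio hs1 hQ hLmem i2) (by simp [t0, hi21])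
    intro x _ hx
    rw [decide_eq_true_iff, t0 x] at hx
    by_cases h1 : x = i1
    · rw [if_pos h1] at hx
      exact absurd (Option.some_injective _ hx) hs2
    · rw [if_neg h1] at hx
      by_cases h2 : x = i2
      · exact h2
      · rw [if_neg h2] at hx; exact absurd hx (by simp)
  have hh1' : daHeld Q pr' q σ1 s1 = [i2] := by
    show ((pr' s1).filter _).take (q s1) = [i2]
    rw [hq1, hpr']
    rw [fpfPrio_filter_two hs1 hQ hLnd hLmem hi21 hrk2 hrk1
      (by simp [t1, hi21]) (by simp [t1]) ?_]
    · rfl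
    · intro x hx
      rw [decide_eq_true_iff, t1 x] at hx
      by_cases h1 : x = i1
      · exact Or.inr h1
      · rw [if_neg h1] at hx
        by_cases h2 : x = i2
        · exact Or.inl h2
        · rw [if_neg h2] at hx; exact absurd hx (by simp)
  have hh2' : daHeld Q pr' q σ2' s1 = [i2] := by
    show ((pr' s1).filter _).take (q s1) = [i2]
    rw [hq1]
    apply filter_take_one (mem_fpfPrio hs1 hQ hLmem i2) (by simp [t2'])
    intro x _ hx
    rw [decide_eq_true_iff, t2' x] at hx
    by_cases h2 : x = i2
    · exact h2
    · rw [if_neg h2] at hx; exact absurd hx (by simp)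
  have step0' : daStep Q pr' q (fun _ => 0) = σ1 := by
    funext j
    by_cases h1 : j = i1
    · subst h1
      rw [daStep_not_mem (s := s2) (by rw [t0]; simp) (by rw [heldq0 _ _ _ hs2]; simp)]
      simp [hσ1]
    · by_cases h2 : j = i2
      · subst h2
        rw [daStep_mem (s := s1) (by rw [t0]; simp [hi21]) (by rw [hh0']; simp)]
        simp [hσ1, hi21]
      · rw [daStep_none (by rw [t0]; simp [h1, h2])]
        simp [hσ1, h1]
  have step1' : daStep Q pr' q σ1 = σ2' := by
    funext j
    by_cases h1 : j = i1
    · subst h1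
      rw [daStep_not_mem (s := s1) (by rw [t1]; simp) (by rw [hh1']; simp [hi12])]
      simp [hσ1, hσ2']
    · by_cases h2 : j = i2
      · subst h2
        rw [daStep_mem (s := s1) (by rw [t1]; simp [hi21]) (by rw [hh1']; simp)]
        simp [hσ1, hσ2', hi21]
      · rw [daStep_none (by rw [t1]; simp [h1, h2])]
        simp [hσ1, hσ2', h1]
  have step2' : daStep Q pr' q σ2' = σ2' := by
    funext j
    by_cases h1 : j = i1
    · subst h1
      rw [daStep_none (by rw [t2']; simp [hi12])]
    · by_cases h2 : j = i2
      · subst h2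
        rw [daStep_mem (s := s1) (by rw [t2']; simp) (by rw [hh2']; simp)]
      · rw [daStep_none (by rw [t2']; simp [h2])]
  have hiterN' : daIter Q pr' q (daN I S) = σ2' := by
    have e2 : (daStep Q pr' q)^[2] (fun _ => 0) = σ2' := by
      show daStep Q pr' q (daStep Q pr' q (fun _ => 0)) = σ2'
      rw [step0', step1']
    rw [daIter, hm, Function.iterate_add_apply, e2]
    exact Function.iterate_fixed step2' m
  have hGS' : ∀ j, FPFk fpf k P (fun _ => L) q j = if j = i2 then some s1 else none := by
    intro j
    show GS Q pr' q j = _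
    rw [GS_apply Q pr' q hQ, hiterN', t2' j]
  ----------------------------------------------------------------
  -- conclusion
  ----------------------------------------------------------------
  refine ⟨P, fun _ => L, q, hP, fun s => ⟨hLnd, hLmem⟩, fun s s' => rfl, ?_, ?_⟩
  · -- SD^k is stable
    constructor
    · intro i
      rw [hGS i]
      by_cases h1 : i = i1
      · rw [if_pos h1, h1]
        exact (hP i1).not_prefLt_none_some (by rw [hA1]; simp)
      · rw [if_neg h1]
        simp [prefLt]
    · rintro i ⟨s, hpref, hbl⟩
      rw [hGS i] at hpref
      by_cases h1 : i = i1
      · rw [if_pos h1, h1] at hpref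
        have hs1mem : s1 ∈ acceptables (P i1) := by rw [hA1]; simp
        obtain ⟨hsmem, hlt⟩ := ((hP i1).prefLt_some_some hs1mem).mp hpref
        rw [hA1] at hsmem hlt
        have hss2 : s = s2 := by
          rcases (by simpa using hsmem : s = s2 ∨ s = s1) with h | h
          · exact h
          · exfalso
            rw [h] at hlt
            exact lt_irrefl _ hlt
        rw [hss2] at hbl
        rcases hbl with h | ⟨j, hj, hpj⟩
        · rw [hq0 s2 hs2] at h
          omega
        · rw [hGS j] at hj
          by_cases hj1 : j = i1
          · rw [if_pos hj1] at hj
            exact hs2 (Option.some_injective _ hj).symm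
          · rw [if_neg hj1] at hj
            exact absurd hj (by simp)
      · by_cases h2 : i = i2
        · rw [h2, if_neg hi21] at hpref
          have hss1 : s = s1 := by
            have := (hP i2).prefLt_none_iff.mp hpref
            rw [hA2] at this
            simpa using this
          rw [hss1] at hbl
          rcases hbl with h | ⟨j, hj, hpj⟩
          · rw [hq1] at h
            have hmemf : i1 ∈ Finset.univ.filter
                (fun j => GSk k P (fun _ => L) q j = some s1) := by
              rw [Finset.mem_filter]
              exact ⟨Finset.mem_univ _, by rw [hGS i1]; simp⟩
            have := Finset.card_pos.mpr ⟨i1, hmemf⟩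
            omega
          · have hji : j = i1 := by
              by_contra hji
              rw [hGS j, if_neg hji] at hj
              exact absurd hj (by simp)
            rw [h2, hji] at hpj
            have hpj' : L.idxOf i2 < L.idxOf i1 := hpj
            rw [hLdef, idx_cons, if_neg hi12, idx_cons, if_pos rfl] at hpj'
            simp [idx_cons] at hpj'
        · rw [if_neg h1] at hpref
          have := (hP i).prefLt_none_iff.mp hpref
          rw [hA0 i h1 h2] at this
          simp at this
  · -- FPF^k is not stable
    intro hst
    apply hst.2 i1
    refine ⟨s1, ?_, Or.inr ⟨i2, by rw [hGS' i2]; simp, ?_⟩⟩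
    · rw [hGS' i1, if_neg hi12]
      exact (hP i1).prefLt_none_iff.mpr (by rw [hA1]; simp)
    · show L.idxOf i1 < L.idxOf i2
      rw [hLdef, idx_cons, if_pos rfl, idx_cons, if_neg hi12, idx_cons, if_pos rfl]
      omega

end PartTwo

/-- Proposition 1: with at least two schools, at least one
first-preference-first school, `k > 1` and a common priority order, the constrained
serial dictatorship `SD^k` (that is, `GS^k` under common priority) is more fair by
stability than the constrained first-preference-first mechanism `FPF^k`. -/
theorem sdk_more_fair_by_stability_than_fpfk
    {I S : Type*} [Fintype I] [DecidableEq I] [Fintype S] [DecidableEq S]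
    (hIS : Fintype.card S < Fintype.card I) (hS : 2 ≤ Fintype.card S)
    (fpf : Finset S) (hfpf : fpf.Nonempty) (k : ℕ) (hk : 1 < k) :
    (∀ (P : I → List (Option S)) (prio : S → List I) (q : S → ℕ),
        (∀ i, ValidPref (P i)) → (∀ s, ValidPrio (prio s)) →
        (∀ s s' : S, prio s = prio s') →
        IsStable P prio q (FPFk fpf k P prio q) → IsStable P prio q (GSk k P prio q)) ∧
    (∃ (P : I → List (Option S)) (prio : S → List I) (q : S → ℕ),
        (∀ i, ValidPref (P i)) ∧ (∀ s, ValidPrio (prio s)) ∧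
        (∀ s s' : S, prio s = prio s') ∧
        IsStable P prio q (GSk k P prio q) ∧
        ¬ IsStable P prio q (FPFk fpf k P prio q)) := by
  constructor
  · intro P prio q hP hprio hcom hstab
    have hne : Nonempty S := Fintype.card_pos_iff.mp (by omega)
    obtain ⟨s0⟩ := hne
    have hpl : prio = fun _ => prio s0 := funext fun s => hcom s s0
    rw [hpl] at hstab ⊢
    exact part_one fpf k (prio s0) P q hP (hprio s0).1 (hprio s0).2 hstab
  · exact part_two fpf hfpf k hk hIS hS

end SchoolChoice
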